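/- arXiv:2108.05024 — 3 statements merged into one kernel-verified Lean document; each statement's English description precedes it below -/
import Mathlib

section
/- Let A ∈ M_{N,N}(ℝ) with ρ(A) < 1, C ∈ ℝ^N, φ : M → M a bijection, and ω : M → ℝ bounded. Define f(m) := ∑_{j=0}^∞ A^j C ω(φ^{-j}(m)). Then f is the unique bounded function M → ℝ^N satisfying f(m) = A f(φ^{-1}(m)) + C ω(m) for all m ∈ M. -/
open Filter Topology
open scoped ENNReal NNReal

attribute [local instance] Matrix.linftyOpNormedRing Matrix.linftyOpNormedAlgebra

/-- Geometric decay of matrix powers from spectral radius < 1 (real matrix, via complexification). -/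
lemma aux_pow_decay (N : ℕ) (A : Matrix (Fin N) (Fin N) ℝ)
    (hρ : spectralRadius ℂ (A.map (Complex.ofReal ·)) < 1) :
    ∃ r : ℝ, 0 ≤ r ∧ r < 1 ∧ ∀ᶠ n in atTop, ‖A ^ n‖ ≤ r ^ n := by
  haveI : CompleteSpace (Matrix (Fin N) (Fin N) ℂ) :=
    FiniteDimensional.complete ℂ (Matrix (Fin N) (Fin N) ℂ)
  obtain ⟨r, hr1, hr2⟩ := ENNReal.lt_iff_exists_nnreal_btwn.mp hρ
  have hgel := spectrum.pow_nnnorm_pow_one_div_tendsto_nhds_spectralRadius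
    (A.map (Complex.ofReal ·))
  have hev : ∀ᶠ n : ℕ in atTop,
      ((‖(A.map (Complex.ofReal ·)) ^ n‖₊ : ℝ≥0∞) ^ (1 / (n : ℝ))) < (r : ℝ≥0∞) :=
    hgel.eventually_lt_const hr1
  refine ⟨r, r.2, by exact_mod_cast hr2, ?_⟩
  filter_upwards [hev, eventually_ge_atTop 1] with n hn hn1
  have hmap : (A.map (Complex.ofReal ·)) ^ n = (A ^ n).map (Complex.ofReal ·) := by
    have := map_pow (Complex.ofRealHom.mapMatrix (m := Fin N)) A n
    exact this.symm
  have hnorm : ∀ B : Matrix (Fin N) (Fin N) ℝ, ‖B.map (Complex.ofReal ·)‖₊ = ‖B‖₊ := by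
    intro B
    simp [Matrix.linfty_opNNNorm_def, Matrix.map_apply]
  rw [hmap, hnorm] at hn
  have hne : (n : ℝ) ≠ 0 := by positivity
  have h2 : ((‖A ^ n‖₊ : ℝ≥0∞) ^ (1 / (n : ℝ))) ^ (n : ℝ) ≤ (r : ℝ≥0∞) ^ (n : ℝ) :=
    ENNReal.rpow_le_rpow hn.le n.cast_nonneg
  rw [← ENNReal.rpow_mul, one_div, inv_mul_cancel₀ hne, ENNReal.rpow_one,
    ENNReal.rpow_natCast, ← ENNReal.coe_pow, ENNReal.coe_le_coe] at h2
  calc ‖A ^ n‖ = ((‖A ^ n‖₊ : ℝ≥0) : ℝ) := rfl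
    _ ≤ ((r ^ n : ℝ≥0) : ℝ) := by exact_mod_cast h2
    _ = (r : ℝ) ^ n := by push_cast; ring

theorem stmt_5 (N : ℕ) (A : Matrix (Fin N) (Fin N) ℝ) (C : Fin N → ℝ)
    {M : Type*} (φ : M ≃ M) (ω : M → ℝ)
    (hρ : spectralRadius ℂ (A.map (Complex.ofReal ·)) < 1)
    (hω : ∃ K : ℝ, ∀ m, |ω m| ≤ K)
    (f : M → (Fin N → ℝ))
    (hf : f = fun m => ∑' j : ℕ, ω ((φ.symm : M → M)^[j] m) • ((A ^ j).mulVec C)) :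
    ((∃ K : ℝ, ∀ m, ‖f m‖ ≤ K) ∧
      ∀ m, f m = A.mulVec (f (φ.symm m)) + ω m • C) ∧
    ∀ g : M → (Fin N → ℝ), (∃ K : ℝ, ∀ m, ‖g m‖ ≤ K) →
      (∀ m, g m = A.mulVec (g (φ.symm m)) + ω m • C) → g = f := by
  obtain ⟨r, hr0, hr1, hev⟩ := aux_pow_decay N A hρ
  obtain ⟨K, hK⟩ := hω
  set K₀ : ℝ := max K 0 with hK₀def
  have hK₀ : ∀ m, |ω m| ≤ K₀ := fun m => (hK m).trans (le_max_left _ _)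
  have hK₀0 : 0 ≤ K₀ := le_max_right _ _
  -- summability of the norms of the matrix powers
  have hb : Summable fun j : ℕ => ‖A ^ j‖ := by
    apply Summable.of_norm_bounded_eventually_nat (g := fun j => r ^ j)
      (summable_geometric_of_lt_one hr0 hr1)
    filter_upwards [hev] with n hn
    simpa [abs_of_nonneg (norm_nonneg _)] using hn
  have hbc : Summable fun j : ℕ => (K₀ * ‖C‖) * ‖A ^ j‖ := hb.mul_left _
  -- the terms and their bounds
  set term : M → ℕ → (Fin N → ℝ) :=
    fun m j => ω ((φ.symm : M → M)^[j] m) • ((A ^ j).mulVec C) with hterm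
  have hbound : ∀ m j, ‖term m j‖ ≤ (K₀ * ‖C‖) * ‖A ^ j‖ := by
    intro m j
    rw [hterm]
    calc ‖ω ((φ.symm : M → M)^[j] m) • ((A ^ j).mulVec C)‖
        = |ω ((φ.symm : M → M)^[j] m)| * ‖(A ^ j).mulVec C‖ := by
          rw [norm_smul, Real.norm_eq_abs]
      _ ≤ K₀ * (‖A ^ j‖ * ‖C‖) :=
          mul_le_mul (hK₀ _) (Matrix.linfty_opNorm_mulVec _ _) (norm_nonneg _) hK₀0
      _ = (K₀ * ‖C‖) * ‖A ^ j‖ := by ring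
  have hsn : ∀ m, Summable fun j => ‖term m j‖ := fun m =>
    hbc.of_nonneg_of_le (fun j => norm_nonneg _) (fun j => hbound m j)
  have hsum : ∀ m, Summable (term m) := fun m => (hsn m).of_norm
  have hfm : ∀ m, f m = ∑' j, term m j := by intro m; rw [hf]
  -- boundedness of f
  have hfb : ∀ m, ‖f m‖ ≤ ∑' j, (K₀ * ‖C‖) * ‖A ^ j‖ := by
    intro m
    rw [hfm m]
    exact (norm_tsum_le_tsum_norm (hsn m)).trans (Summable.tsum_le_tsum (hbound m) (hsn m) hbc)
  -- the functional equation
  have hfe : ∀ m, f m = A.mulVec (f (φ.symm m)) + ω m • C := by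
    intro m
    rw [hfm m, Summable.tsum_eq_zero_add (hsum m)]
    have h0 : term m 0 = ω m • C := by
      simp [hterm]
    have hs : ∀ j : ℕ, term m (j + 1) = A.mulVec (term (φ.symm m) j) := by
      intro j
      rw [hterm]
      simp only [Function.iterate_succ_apply, pow_succ']
      rw [← Matrix.mulVec_mulVec, Matrix.mulVec_smul]
    have hT : ∑' j : ℕ, term m (j + 1) = A.mulVec (f (φ.symm m)) := by
      simp_rw [hs]
      rw [hfm]
      exact ((Matrix.mulVecLin A).toContinuousLinearMap.map_tsum (hsum (φ.symm m))).symm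
    rw [h0, hT, add_comm]
  refine ⟨⟨⟨_, hfb⟩, hfe⟩, ?_⟩
  -- uniqueness
  rintro g ⟨Kg, hKg⟩ hge
  have hKf : ∀ m, ‖f m‖ ≤ ∑' j, (K₀ * ‖C‖) * ‖A ^ j‖ := hfb
  set c : ℝ := (max Kg 0) + ∑' j, (K₀ * ‖C‖) * ‖A ^ j‖ with hc
  have hd : ∀ m, ‖g m - f m‖ ≤ c := by
    intro m
    refine (norm_sub_le _ _).trans (add_le_add ((hKg m).trans (le_max_left _ _)) (hKf m))
  have hstep : ∀ m, g m - f m = A.mulVec (g (φ.symm m) - f (φ.symm m)) := by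
    intro m
    rw [hge m, hfe m, Matrix.mulVec_sub]
    abel
  have hiter : ∀ n m, g m - f m =
      (A ^ n).mulVec (g ((φ.symm : M → M)^[n] m) - f ((φ.symm : M → M)^[n] m)) := by
    intro n
    induction n with
    | zero => intro m; simp
    | succ n ih =>
      intro m
      rw [hstep m, ih (φ.symm m), Matrix.mulVec_mulVec, ← pow_succ',
        ← Function.iterate_succ_apply]
  have hzero : ∀ m, g m - f m = 0 := by
    intro m
    have hle : ∀ n, ‖g m - f m‖ ≤ ‖A ^ n‖ * c := by
      intro n
      rw [hiter n m]
      exact (Matrix.linfty_opNorm_mulVec _ _).trans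
        (mul_le_mul_of_nonneg_left (hd _) (norm_nonneg _))
    have htend : Tendsto (fun n : ℕ => ‖A ^ n‖ * c) atTop (𝓝 0) := by
      have h1 : Tendsto (fun n : ℕ => ‖A ^ n‖) atTop (𝓝 0) := by
        apply squeeze_zero' (Eventually.of_forall fun n => norm_nonneg _) hev
        exact tendsto_pow_atTop_nhds_zero_of_lt_one hr0 hr1
      simpa using h1.mul_const c
    have : ‖g m - f m‖ ≤ 0 := ge_of_tendsto' htend hle
    simpa [norm_le_zero_iff] using this
  funext m
  have := hzero m
  exact sub_eq_zero.mp this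
end

section
/- Let A be a random N × N real matrix and C a random vector in ℝ^N whose N² + N entries are jointly independent random variables with atomless distributions, and let p₁, …, pₙ ∈ ℂ[x] (n ≤ N) be linearly independent polynomials of degree at most n-1. Then the vectors p₁(A)C, …, pₙ(A)C are linearly independent almost surely. -/
open MeasureTheory Matrix


lemma real_roots_finite (q : Polynomial ℂ) (hq : q ≠ 0) :
    {t : ℝ | q.eval (t : ℂ) = 0}.Finite := by
  have hinj : Set.InjOn (fun t : ℝ => (t : ℂ)) {t : ℝ | q.eval (t : ℂ) = 0} :=
    fun a _ b _ h => Complex.ofReal_injective h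
  refine Set.Finite.of_finite_image ?_ hinj
  refine (Polynomial.finite_setOf_isRoot hq).subset ?_
  rintro z ⟨t, ht, rfl⟩; exact ht

lemma aeval_eq_eval_mv {ι : Type*} (f : ι → ℂ) (P : MvPolynomial ι ℂ) :
    MvPolynomial.aeval f P = MvPolynomial.eval f P := by
  rw [← MvPolynomial.coe_aeval_eq_eval]; rfl

lemma mv_null_fin : ∀ (m : ℕ) (ν : Fin m → Measure ℝ),
    (∀ i, IsProbabilityMeasure (ν i)) → (∀ i, NoAtoms (ν i)) →
    ∀ (P : MvPolynomial (Fin m) ℂ), P ≠ 0 →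
    Measure.pi ν {x | MvPolynomial.eval (fun k => (x k : ℂ)) P = 0} = 0 := by
  intro m
  induction m with
  | zero =>
    intro ν _ _ P hP
    have : {x : Fin 0 → ℝ | MvPolynomial.eval (fun k => (x k : ℂ)) P = 0} = ∅ := by
      ext x
      simp only [Set.mem_setOf_eq, Set.mem_empty_iff_false, iff_false]
      rw [show P = MvPolynomial.C (MvPolynomial.constantCoeff P) from
        (MvPolynomial.eq_C_of_isEmpty P)]
      simp only [MvPolynomial.eval_C]
      intro h
      apply hP
      rw [show P = MvPolynomial.C (MvPolynomial.constantCoeff P) from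
        (MvPolynomial.eq_C_of_isEmpty P), h, map_zero]
    rw [this]; simp
  | succ m IH =>
    intro ν hprob hatom P hP
    haveI := hprob; haveI := hatom
    set q : Polynomial (MvPolynomial (Fin m) ℂ) := MvPolynomial.finSuccEquiv ℂ m P with hq
    have hqne : q ≠ 0 := by
      simp only [hq, ne_eq, EmbeddingLike.map_eq_zero_iff]
      exact hP
    set c : MvPolynomial (Fin m) ℂ := q.leadingCoeff with hc
    have hcne : c ≠ 0 := Polynomial.leadingCoeff_ne_zero.mpr hqne
    -- measurability of polynomial zero sets
    have hcontaux : ∀ (r : ℕ) (Q : MvPolynomial (Fin r) ℂ),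
        Continuous (fun x : Fin r → ℝ => MvPolynomial.eval (fun k => (x k : ℂ)) Q) := by
      intro r Q
      have h1 : Continuous fun v : Fin r → ℂ => MvPolynomial.eval v Q :=
        MvPolynomial.continuous_eval Q
      exact h1.comp (continuous_pi fun k => Complex.continuous_ofReal.comp (continuous_apply k))
    set νtail : Fin m → Measure ℝ := fun i => ν i.succ with hνtail
    haveI : ∀ i, IsProbabilityMeasure (νtail i) := fun i => hprob _
    haveI : ∀ i, NoAtoms (νtail i) := fun i => hatom _
    set B : Set (Fin m → ℝ) := {y | MvPolynomial.eval (fun k => (y k : ℂ)) c = 0} with hB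
    have hBmeas : MeasurableSet B :=
      ((hcontaux m c).measurable (measurableSet_singleton 0))
    have hBnull : Measure.pi νtail B = 0 := IH νtail (fun i => hprob _) (fun i => hatom _) c hcne
    set Z : Set (Fin (m+1) → ℝ) := {x | MvPolynomial.eval (fun k => (x k : ℂ)) P = 0} with hZ
    have hZmeas : MeasurableSet Z := ((hcontaux (m+1) P).measurable (measurableSet_singleton 0))
    set e := MeasurableEquiv.piFinSuccAbove (fun _ : Fin (m+1) => ℝ) 0 with he
    have hmp := measurePreserving_piFinSuccAbove ν 0
    -- the pushforward product measure
    have hS : Z = e ⁻¹' (e '' Z) := by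
      rw [MeasurableEquiv.image_eq_preimage_symm]; ext x; simp
    have hSmeas : MeasurableSet (e '' Z) := by
      rw [MeasurableEquiv.image_eq_preimage_symm]
      exact e.symm.measurable hZmeas
    have hpush : Measure.pi ν Z = ((ν 0).prod (Measure.pi fun i => ν ((0 : Fin (m+1)).succAbove i))) (e '' Z) := by
      rw [← hmp.map_eq, MeasurableEquiv.map_apply, ← hS]
    have hsucc : (fun i => ν ((0 : Fin (m+1)).succAbove i)) = νtail := by
      funext i; simp [hνtail, Fin.succAbove_zero]
    rw [hpush, hsucc]
    -- describe sections
    have hsec : ∀ t : ℝ, ∀ y : Fin m → ℝ, ((t, y) ∈ e '' Z ↔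
        Polynomial.eval (t : ℂ) (q.map (MvPolynomial.eval (fun k => (y k : ℂ)))) = 0) := by
      intro t y
      rw [MeasurableEquiv.image_eq_preimage_symm]
      have hsymm : e.symm (t, y) = Fin.cons t y := by
        simp only [he, MeasurableEquiv.piFinSuccAbove_symm_apply, Fin.insertNthEquiv,
          Equiv.coe_fn_mk, Fin.insertNth_zero]
        congr 1
      simp only [Set.mem_preimage, hsymm, hZ, Set.mem_setOf_eq]
      have hcons : (fun k => ((Fin.cons t y : Fin (m+1) → ℝ) k : ℂ))
          = Fin.cons (t : ℂ) (fun k => (y k : ℂ)) := by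
        funext k
        refine Fin.cases ?_ (fun i => ?_) k <;> simp
      rw [hcons, MvPolynomial.eval_eq_eval_mv_eval']
    haveI : SigmaFinite (Measure.pi νtail) := inferInstance
    rw [Measure.prod_apply_symm hSmeas]
    have hae : ∀ᵐ y ∂(Measure.pi νtail), (ν 0) ((fun t => (t, y)) ⁻¹' (e '' Z)) = 0 := by
      filter_upwards [measure_eq_zero_iff_ae_notMem.mp hBnull] with y hy
      have hqy : q.map (MvPolynomial.eval (fun k => (y k : ℂ))) ≠ 0 := by
        intro h0
        apply hy
        have := congrArg (fun r => Polynomial.coeff r q.natDegree) h0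
        simp only [Polynomial.coeff_map, Polynomial.coeff_zero] at this
        exact this
      have hfin : ((fun t : ℝ => (t, y)) ⁻¹' (e '' Z)).Finite := by
        refine (real_roots_finite _ hqy).subset ?_
        intro t ht
        exact (hsec t y).mp ht
      exact (haveI : NullSingletonClass (ν 0) := hatom 0; hfin.countable.measure_zero _)
    rw [lintegral_congr_ae hae, lintegral_zero]


lemma mv_null {ι : Type*} [Fintype ι] (ν : ι → Measure ℝ)
    (hprob : ∀ i, IsProbabilityMeasure (ν i)) (hatom : ∀ i, NoAtoms (ν i))
    (P : MvPolynomial ι ℂ) (hP : P ≠ 0) :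
    Measure.pi ν {x | MvPolynomial.eval (fun k => (x k : ℂ)) P = 0} = 0 := by
  classical
  set m := Fintype.card ι
  set e : Fin m ≃ ι := (Fintype.equivFin ι).symm with he
  haveI := hprob
  haveI : ∀ i, SigmaFinite (ν i) := fun i => inferInstance
  have hmp := measurePreserving_piCongrLeft (α := fun _ : ι => ℝ) (μ := ν) e
  set g := MeasurableEquiv.piCongrLeft (fun _ : ι => ℝ) e with hg
  set Z : Set (ι → ℝ) := {x | MvPolynomial.eval (fun k => (x k : ℂ)) P = 0} with hZ
  have hgx : ∀ (x : Fin m → ℝ) (k : ι), g x k = x (e.symm k) := by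
    intro x k
    have h1 := Equiv.piCongrLeft_apply_apply (fun _ : ι => ℝ) e x (e.symm k)
    have h2 : g x = (Equiv.piCongrLeft (fun _ : ι => ℝ) e) x := by rw [hg]; rfl
    rw [h2]
    conv_lhs => rw [← Equiv.apply_symm_apply e k]
    exact h1
  have hpre : g ⁻¹' Z =
      {x : Fin m → ℝ | MvPolynomial.eval (fun k => (x k : ℂ))
        (MvPolynomial.rename e.symm P) = 0} := by
    ext x
    simp only [Set.mem_preimage, hZ, Set.mem_setOf_eq, MvPolynomial.eval_rename]
    have hfun : (fun k : ι => ((g x k : ℝ) : ℂ)) = (fun k : ι => ((x (e.symm k) : ℝ) : ℂ)) := by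
      funext k; rw [hgx]
    rw [hfun]
    rfl
  have hrne : MvPolynomial.rename e.symm P ≠ 0 := by
    intro h0
    exact hP ((MvPolynomial.rename_injective _ e.symm.injective).eq_iff.mp
      (by simpa using h0) )
  calc Measure.pi ν Z = (Measure.pi (fun i : Fin m => ν (e i))).map g Z := by
        rw [hmp.map_eq]
    _ = Measure.pi (fun i : Fin m => ν (e i)) (g ⁻¹' Z) := by
        rw [MeasurableEquiv.map_apply]
    _ = 0 := by
        rw [hpre]
        exact mv_null_fin m _ (fun i => hprob _) (fun i => hatom _) _ hrne

lemma joint_pi {Ω ι : Type*} [MeasurableSpace Ω] [Fintype ι] (μ : Measure Ω)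
    [IsProbabilityMeasure μ] (Y : ι → Ω → ℝ) (hm : ∀ k, Measurable (Y k))
    (hindep : ProbabilityTheory.iIndepFun Y μ) :
    μ.map (fun ω k => Y k ω) = Measure.pi (fun k => μ.map (Y k)) := by
  haveI : ∀ k, IsProbabilityMeasure (μ.map (Y k)) :=
    fun k => Measure.isProbabilityMeasure_map (hm k).aemeasurable
  refine (Measure.pi_eq (μ := fun k => μ.map (Y k)) ?_).symm
  intro s hs
  have hJ : Measurable (fun ω k => Y k ω) := measurable_pi_lambda _ hm
  rw [Measure.map_apply hJ (MeasurableSet.univ_pi hs)]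
  have hpre : (fun ω k => Y k ω) ⁻¹' Set.univ.pi s = ⋂ k, Y k ⁻¹' s k := by
    ext ω; simp [Set.mem_univ_pi]
  rw [hpre]
  have := (ProbabilityTheory.iIndepFun_iff_measure_inter_preimage_eq_mul.mp hindep)
    Finset.univ (sets := s) (fun i _ => hs i)
  have h2 : (⋂ k ∈ Finset.univ, Y k ⁻¹' s k) = ⋂ k, Y k ⁻¹' s k := by
    simp
  rw [h2] at this
  rw [this]
  refine Finset.prod_congr rfl fun k _ => ?_
  rw [Measure.map_apply (hm k) (hs k)]

theorem stmt_16 {Ω : Type*} [MeasurableSpace Ω] (μ : Measure Ω) [IsProbabilityMeasure μ]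
    (N n : ℕ) (hnN : n ≤ N)
    (A : Ω → Matrix (Fin N) (Fin N) ℝ) (C : Ω → (Fin N → ℝ))
    (Y : (Fin N × Fin N) ⊕ Fin N → Ω → ℝ)
    (hY : Y = Sum.elim (fun p ω => A ω p.1 p.2) (fun i ω => C ω i))
    (hm : ∀ k, Measurable (Y k))
    (hindep : ProbabilityTheory.iIndepFun Y μ)
    (hatomless : ∀ k, ∀ a : ℝ, μ {ω | Y k ω = a} = 0)
    (p : Fin n → Polynomial ℂ) (hdeg : ∀ j, (p j).degree < n)
    (hli : LinearIndependent ℂ p) :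
    μ {ω | ¬ LinearIndependent ℂ
        (fun j : Fin n =>
          (Polynomial.aeval ((A ω).map (Complex.ofReal ·)) (p j)).mulVec
            (fun i => (C ω i : ℂ)))} = 0 := by
  classical
  set Am : Matrix (Fin N) (Fin N) (MvPolynomial ((Fin N × Fin N) ⊕ Fin N) ℂ) :=
    Matrix.of fun i j => MvPolynomial.X (Sum.inl (i, j)) with hAm
  set Cm : Fin N → MvPolynomial ((Fin N × Fin N) ⊕ Fin N) ℂ := fun i => MvPolynomial.X (Sum.inr i) with hCm
  set M : Matrix (Fin n) (Fin n) (MvPolynomial ((Fin N × Fin N) ⊕ Fin N) ℂ) :=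
    Matrix.of fun i j => ((Polynomial.aeval Am (p j)).mulVec Cm) (Fin.castLE hnN i) with hM
  set P := M.det with hPdef
  -- evaluation commutation
  have keyEval : ∀ (φ : MvPolynomial ((Fin N × Fin N) ⊕ Fin N) ℂ →ₐ[ℂ] ℂ),
      φ P = Matrix.det (Matrix.of fun i j : Fin n =>
        ((Polynomial.aeval (Am.map φ) (p j)).mulVec (fun k => φ (Cm k))) (Fin.castLE hnN i)) := by
    intro φ
    have hdet : φ P = (M.map ⇑φ).det := by
      rw [hPdef]
      exact RingHom.map_det φ.toRingHom M
    rw [hdet]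
    congr 1
    ext i j
    have e1 : (M.map ⇑φ) i j
        = φ (((Polynomial.aeval Am (p j)).mulVec Cm) (Fin.castLE hnN i)) := rfl
    have hmv := RingHom.map_mulVec φ.toRingHom (Polynomial.aeval Am (p j)) Cm (Fin.castLE hnN i)
    have h1 : ((Polynomial.aeval Am (p j)).map ⇑φ.toRingHom : Matrix (Fin N) (Fin N) ℂ)
        = Polynomial.aeval (Am.map ⇑φ) (p j) := by
      have h2 := Polynomial.aeval_algHom_apply (AlgHom.mapMatrix φ (m := Fin N)) Am (p j)
      rw [AlgHom.mapMatrix_apply, AlgHom.mapMatrix_apply] at h2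
      exact h2.symm
    rw [e1]
    refine Eq.trans hmv ?_
    rw [h1]
    rfl
  -- the witness: P ≠ 0
  have hPne : P ≠ 0 := by
    set d : Fin N → ℂ := fun i => ((i : ℕ) : ℂ) with hd
    set w : ((Fin N × Fin N) ⊕ Fin N) → ℂ := Sum.elim (fun pr => if pr.1 = pr.2 then d pr.1 else 0) (fun _ => (1 : ℂ))
      with hw
    set φw : MvPolynomial ((Fin N × Fin N) ⊕ Fin N) ℂ →ₐ[ℂ] ℂ := MvPolynomial.aeval w with hφw
    have hAmw : Am.map φw = Matrix.diagonal d := by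
      ext i j
      simp [hAm, hφw, hw, Matrix.diagonal, Matrix.map_apply]
    have hCmw : (fun k => φw (Cm k)) = fun _ => (1 : ℂ) := by
      funext k; simp [hCm, hφw, hw]
    have hdiagv : ∀ q : Polynomial ℂ, Polynomial.aeval (Matrix.diagonal d) q
        = Matrix.diagonal (fun k => Polynomial.eval (d k) q) := by
      intro q
      have h1 := Polynomial.aeval_algHom_apply
        (Matrix.diagonalAlgHom (n := Fin N) (α := ℂ) ℂ) d q
      have h2 : ∀ k, (Polynomial.aeval d q) k = Polynomial.eval (d k) q := by
        intro k
        have h3 := Polynomial.aeval_algHom_apply (Pi.evalAlgHom ℂ (fun _ : Fin N => ℂ) k) d q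
        simp only [Pi.evalAlgHom_apply] at h3
        rw [← h3, Polynomial.coe_aeval_eq_eval]
      have h4 : Matrix.diagonalAlgHom (n := Fin N) (α := ℂ) ℂ d = Matrix.diagonal d := rfl
      have h5 : Polynomial.aeval d q = fun k => Polynomial.eval (d k) q := funext h2
      rw [h4] at h1
      rw [h1, h5]
      rfl
    have hval : φw P = Matrix.det (Matrix.of fun i j : Fin n =>
        Polynomial.eval ((((i : Fin n) : ℕ) : ℂ)) (p j)) := by
      rw [keyEval φw, hAmw, hCmw]
      congr 1
      ext i j
      simp only [Matrix.of_apply]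
      rw [hdiagv (p j), Matrix.mulVec_diagonal]
      simp [hd, Fin.coe_castLE]
    -- factor through Vandermonde
    have hpne : ∀ j, p j ≠ 0 := fun j => hli.ne_zero j
    have hnatdeg : ∀ j, (p j).natDegree < n := fun j =>
      (Polynomial.natDegree_lt_iff_degree_lt (hpne j)).mpr (hdeg j)
    set Q : Matrix (Fin n) (Fin n) ℂ := Matrix.of fun j k => (p j).coeff k with hQ
    have hfact : (Matrix.of fun i j : Fin n =>
        Polynomial.eval ((((i : Fin n) : ℕ) : ℂ)) (p j))
        = (Matrix.vandermonde fun i : Fin n => ((i : ℕ) : ℂ)) * Qᵀ := by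
      ext i j
      rw [Matrix.mul_apply]
      show Polynomial.eval (((i : ℕ) : ℂ)) (p j) = _
      rw [Polynomial.eval_eq_sum_range' (lt_of_lt_of_le (hnatdeg j) (le_refl n)),
        ← Fin.sum_univ_eq_sum_range (fun k => (p j).coeff k * (((i : ℕ) : ℂ)) ^ k) n]
      refine Finset.sum_congr rfl fun k _ => ?_
      rw [Matrix.vandermonde]
      show (p j).coeff k * ((i : ℕ) : ℂ) ^ (k : ℕ) = ((i : ℕ) : ℂ) ^ (k : ℕ) * Qᵀ k j
      rw [mul_comm]
      rfl
    have hVne : (Matrix.vandermonde fun i : Fin n => ((i : ℕ) : ℂ)).det ≠ 0 := by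
      rw [Ne, ← not_not (a := _ = 0), not_not]
      refine Matrix.det_vandermonde_ne_zero_iff.mpr ?_
      intro a b hab
      exact Fin.ext (Nat.cast_injective hab)
    have hQrows : LinearIndependent ℂ (fun j : Fin n => Q j) := by
      have hmem : ∀ j, p j ∈ Polynomial.degreeLT ℂ n := fun j =>
        Polynomial.mem_degreeLT.mpr (hdeg j)
      have h1 : LinearIndependent ℂ (fun j => (⟨p j, hmem j⟩ : Polynomial.degreeLT ℂ n)) := by
        apply LinearIndependent.of_comp (Polynomial.degreeLT ℂ n).subtype
        exact hli
      have h2 := h1.map' (Polynomial.degreeLTEquiv ℂ n).toLinearMap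
        (LinearEquiv.ker _)
      exact h2
    have hQdet : Q.det ≠ 0 := by
      have := Matrix.linearIndependent_rows_iff_isUnit.mp hQrows
      have := (Matrix.isUnit_iff_isUnit_det _).mp this
      exact this.ne_zero
    have : φw P ≠ 0 := by
      rw [hval, hfact, Matrix.det_mul, Matrix.det_transpose]
      exact mul_ne_zero hVne hQdet
    intro h0
    apply this
    rw [h0, map_zero]
  -- pointwise inclusion
  have hincl : ∀ ω : Ω, MvPolynomial.eval (fun k => ((Y k ω : ℝ) : ℂ)) P ≠ 0 →
      LinearIndependent ℂ (fun j : Fin n =>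
        (Polynomial.aeval ((A ω).map (Complex.ofReal ·)) (p j)).mulVec
          (fun i => (C ω i : ℂ))) := by
    intro ω hne
    set xc : ((Fin N × Fin N) ⊕ Fin N) → ℂ := fun k => ((Y k ω : ℝ) : ℂ) with hxc
    set φω : MvPolynomial ((Fin N × Fin N) ⊕ Fin N) ℂ →ₐ[ℂ] ℂ := MvPolynomial.aeval xc with hφω
    set v : Fin n → (Fin N → ℂ) := fun j =>
      (Polynomial.aeval ((A ω).map (Complex.ofReal ·)) (p j)).mulVec
        (fun i => (C ω i : ℂ)) with hv
    have hAmω : Am.map φω = (A ω).map (Complex.ofReal ·) := by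
      ext i j
      simp [hAm, hφω, hxc, Matrix.map_apply, hY]
    have hCmω : (fun k => φω (Cm k)) = fun i => ((C ω i : ℝ) : ℂ) := by
      funext k; simp [hCm, hφω, hxc, hY]
    have hdetW : Matrix.det (Matrix.of fun i j : Fin n => v j (Fin.castLE hnN i)) ≠ 0 := by
      have h1 := keyEval φω
      rw [hAmω, hCmω] at h1
      rw [hφω, aeval_eq_eval_mv] at h1
      rw [← h1]
      exact hne
    have hunit : IsUnit (Matrix.of fun i j : Fin n => v j (Fin.castLE hnN i)) :=
      (Matrix.isUnit_iff_isUnit_det _).mpr (Ne.isUnit hdetW)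
    have hcols := Matrix.linearIndependent_cols_iff_isUnit.mpr hunit
    refine LinearIndependent.of_comp (LinearMap.funLeft ℂ ℂ (Fin.castLE hnN)) ?_
    exact hcols
  -- push to product measure
  set ν : ((Fin N × Fin N) ⊕ Fin N) → Measure ℝ := fun k => μ.map (Y k) with hν
  have hprob : ∀ k, IsProbabilityMeasure (ν k) := fun k =>
    Measure.isProbabilityMeasure_map (hm k).aemeasurable
  have hatom : ∀ k, NoAtoms (ν k) := by
    intro k
    constructor
    intro a
    show (μ.map (Y k)) {a} = 0
    rw [Measure.map_apply (hm k) (measurableSet_singleton a)]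
    exact hatomless k a
  set Z : Set (((Fin N × Fin N) ⊕ Fin N) → ℝ) := {x | MvPolynomial.eval (fun k => (x k : ℂ)) P = 0} with hZ
  have hZmeas : MeasurableSet Z := by
    have h1 : Continuous fun v : ((Fin N × Fin N) ⊕ Fin N) → ℂ => MvPolynomial.eval v P := MvPolynomial.continuous_eval P
    have h2 : Continuous fun x : ((Fin N × Fin N) ⊕ Fin N) → ℝ => MvPolynomial.eval (fun k => (x k : ℂ)) P :=
      h1.comp (continuous_pi fun k => Complex.continuous_ofReal.comp (continuous_apply k))
    exact h2.measurable (measurableSet_singleton 0)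
  have hsub : {ω | ¬ LinearIndependent ℂ
      (fun j : Fin n =>
        (Polynomial.aeval ((A ω).map (Complex.ofReal ·)) (p j)).mulVec
          (fun i => (C ω i : ℂ)))} ⊆ (fun ω k => Y k ω) ⁻¹' Z := by
    intro ω hω
    by_contra hc
    exact hω (hincl ω hc)
  refine measure_mono_null hsub ?_
  have hJ : Measurable (fun ω (k : ((Fin N × Fin N) ⊕ Fin N)) => Y k ω) := measurable_pi_lambda _ hm
  rw [← Measure.map_apply hJ hZmeas, joint_pi μ Y hm hindep]
  exact mv_null ν hprob hatom P hPne
end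

section
/- Let A be a random N × N real matrix and C a random vector in ℝ^N with jointly independent atomless entries. Then the vectors C, AC, A²C, …, A^{N-1}C are linearly independent almost surely. -/
open MeasureTheory MvPolynomial

lemma aux_measurable_eval17 {ι : Type*} (p : MvPolynomial ι ℝ) :
    Measurable fun x : ι → ℝ => MvPolynomial.eval x p := by
  induction p using MvPolynomial.induction_on with
  | C a => simp
  | add p q hp hq => simp only [map_add]; exact hp.add hq
  | mul_X p i hp => simp only [map_mul, eval_X]; exact hp.mul (measurable_pi_apply i)

lemma aux_pi_eval_zero : ∀ (n : ℕ) (ν : Fin n → Measure ℝ),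
    (∀ i, IsProbabilityMeasure (ν i)) → (∀ i, NoAtoms (ν i)) →
    ∀ p : MvPolynomial (Fin n) ℝ, p ≠ 0 →
    Measure.pi ν {x | MvPolynomial.eval x p = 0} = 0 := by
  intro n
  induction n with
  | zero =>
    intro ν _ _ p hp
    obtain ⟨c, rfl⟩ := MvPolynomial.C_surjective (Fin 0) p
    have hc : c ≠ 0 := fun h => hp (by rw [h, map_zero])
    have : {x : Fin 0 → ℝ | MvPolynomial.eval x (C c) = 0} = ∅ := by
      ext x; simp [hc]
    rw [this]; simp
  | succ n ih =>
    intro ν hprob hatom p hp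
    haveI := hprob; haveI := hatom
    set q := finSuccEquiv ℝ n p with hqdef
    have hq : q ≠ 0 := by
      intro h
      apply hp
      have := congrArg (finSuccEquiv ℝ n).symm (h ▸ hqdef.symm)
      simpa using this
    have hlead : q.leadingCoeff ≠ 0 := Polynomial.leadingCoeff_ne_zero.mpr hq
    set ν' : Fin n → Measure ℝ := fun j => ν ((0 : Fin (n+1)).succAbove j) with hν'
    haveI : ∀ j, IsProbabilityMeasure (ν' j) := fun j => hprob _
    haveI : ∀ j, NoAtoms (ν' j) := fun j => hatom _
    have ihlead := ih ν' (fun j => hprob _) (fun j => hatom _) q.leadingCoeff hlead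
    -- the set
    set S : Set (Fin (n+1) → ℝ) := {x | MvPolynomial.eval x p = 0} with hS
    have hSm : MeasurableSet S := (aux_measurable_eval17 p) (measurableSet_singleton 0)
    set T : Set (ℝ × (Fin n → ℝ)) :=
      {z | Polynomial.eval z.1 (Polynomial.map (MvPolynomial.eval z.2) q) = 0} with hT
    have hTeq : T = {z : ℝ × (Fin n → ℝ) | MvPolynomial.eval (Fin.cons z.1 z.2) p = 0} := by
      ext ⟨a, x⟩
      simp only [hT, Set.mem_setOf_eq, MvPolynomial.eval_eq_eval_mv_eval']
      exact Iff.rfl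
    have hTm : MeasurableSet T := by
      rw [hTeq]
      have hcons : Measurable fun z : ℝ × (Fin n → ℝ) => (Fin.cons z.1 z.2 : Fin (n+1) → ℝ) := by
        apply measurable_pi_lambda
        intro i
        refine Fin.cases ?_ ?_ i
        · exact measurable_fst
        · intro j; exact (measurable_pi_apply j).comp measurable_snd
      exact ((aux_measurable_eval17 p).comp hcons) (measurableSet_singleton 0)
    have mp := (measurePreserving_piFinSuccAbove ν 0).symm
    -- mp : MeasurePreserving e.symm ((ν 0).prod (pi ν')) (pi ν)
    have hpre : (MeasurableEquiv.piFinSuccAbove (fun _ : Fin (n+1) => ℝ) 0).symm ⁻¹' S = T := by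
      ext ⟨a, x⟩
      have : (MeasurableEquiv.piFinSuccAbove (fun _ : Fin (n+1) => ℝ) 0).symm (a, x)
          = Fin.cons a x := by
        simp [MeasurableEquiv.piFinSuccAbove, Fin.insertNth_zero', Fin.consEquiv]
      rw [hTeq]
      simp only [Set.mem_preimage, this, hS, Set.mem_setOf_eq]
    have key : Measure.pi ν S = ((ν 0).prod (Measure.pi ν')) T := by
      rw [← hpre]
      exact (mp.measure_preimage hSm.nullMeasurableSet).symm
    rw [key]
    -- swap the product
    set T' : Set ((Fin n → ℝ) × ℝ) :=
      {z | Polynomial.eval z.2 (Polynomial.map (MvPolynomial.eval z.1) q) = 0} with hT'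
    have hT'm : MeasurableSet T' := by
      have : T' = Prod.swap ⁻¹' T := rfl
      rw [this]
      exact hTm.preimage measurable_swap
    have hswap : ((ν 0).prod (Measure.pi ν')) T = ((Measure.pi ν').prod (ν 0)) T' := by
      have : T = Prod.swap ⁻¹' T' := rfl
      conv_rhs => rw [← Measure.prod_swap]
      rw [Measure.map_apply measurable_swap hT'm]
      rfl
    rw [hswap, Measure.measure_prod_null hT'm]
    -- a.e. x, the one-variable polynomial is nonzero
    have hae : ∀ᵐ x ∂(Measure.pi ν'), MvPolynomial.eval x q.leadingCoeff ≠ 0 := by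
      exact measure_eq_zero_iff_ae_notMem.mp ihlead
    filter_upwards [hae] with x hx
    have hmap : Polynomial.map (MvPolynomial.eval x) q ≠ 0 := by
      intro h
      apply hx
      have h2 := congrArg (fun r => Polynomial.coeff r q.natDegree) h
      simp only [Polynomial.coeff_map, Polynomial.coeff_zero] at h2
      rw [Polynomial.leadingCoeff]
      exact h2
    have hfin : Set.Finite {a : ℝ | Polynomial.eval a (Polynomial.map (MvPolynomial.eval x) q) = 0} :=
      Polynomial.finite_setOf_isRoot hmap
    have : Prod.mk x ⁻¹' T' = {a : ℝ | Polynomial.eval a (Polynomial.map (MvPolynomial.eval x) q) = 0} := rfl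
    simp only [Pi.zero_apply]
    rw [this]
    haveI : NullSingletonClass (ν 0) := hatom 0
    exact hfin.countable.measure_zero _


noncomputable def kryM {R : Type*} [CommRing R] (N : ℕ)
    (A : Matrix (Fin N) (Fin N) R) (c : Fin N → R) : Matrix (Fin N) (Fin N) R :=
  Matrix.of fun i j => ((A ^ (j : ℕ)).mulVec c) i

noncomputable def kryP (N : ℕ) : MvPolynomial ((Fin N × Fin N) ⊕ Fin N) ℝ :=
  (kryM N (Matrix.of fun a b => X (Sum.inl (a, b))) (fun k => X (Sum.inr k))).det


lemma kryM_map {R S : Type*} [CommRing R] [CommRing S] (f : R →+* S) (N : ℕ)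
    (A : Matrix (Fin N) (Fin N) R) (c : Fin N → R) :
    (kryM N A c).map f = kryM N (A.map f) (fun i => f (c i)) := by
  ext i j
  have hpow : (A ^ (j : ℕ)).map f = (A.map f) ^ (j : ℕ) := by
    have := map_pow (f.mapMatrix) A (j : ℕ)
    simpa [RingHom.mapMatrix_apply] using this
  simp only [kryM, Matrix.map_apply, Matrix.of_apply, Matrix.mulVec, dotProduct, map_sum, map_mul]
  refine Finset.sum_congr rfl fun k _ => ?_
  rw [← hpow, Matrix.map_apply]

-- witness: shift matrix and e0
lemma kryM_shift (N : ℕ) :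
    kryM N (Matrix.of fun i b : Fin N => if (b : ℕ) + 1 = (i : ℕ) then (1:ℝ) else 0)
      (fun i => if (i : ℕ) = 0 then 1 else 0) = 1 := by
  set A0 : Matrix (Fin N) (Fin N) ℝ :=
    Matrix.of fun i b => if (b : ℕ) + 1 = (i : ℕ) then (1:ℝ) else 0 with hA0
  have key : ∀ k : ℕ, (A0 ^ k).mulVec (fun i => if (i : ℕ) = 0 then (1:ℝ) else 0)
      = fun i : Fin N => if (i : ℕ) = k then 1 else 0 := by
    intro k
    induction k with
    | zero => simp [Matrix.one_mulVec]
    | succ k ihk =>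
      rw [pow_succ', ← Matrix.mulVec_mulVec, ihk]
      funext i
      simp only [Matrix.mulVec, dotProduct, hA0, Matrix.of_apply]
      by_cases hk : k < N
      · rw [Finset.sum_eq_single (⟨k, hk⟩ : Fin N)]
        · simp [eq_comm]
        · intro b _ hb
          have : (b : ℕ) ≠ k := fun h => hb (Fin.ext h)
          simp [this]
        · simp
      · have h1 : ∀ b : Fin N, (if (b:ℕ) + 1 = (i:ℕ) then (1:ℝ) else 0) *
            (if (b:ℕ) = k then 1 else 0) = 0 := by
          intro b
          have : (b : ℕ) ≠ k := fun h => hk (h ▸ b.isLt)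
          simp [this]
        have h2 : (i : ℕ) ≠ k + 1 := by
          intro h
          have := i.isLt
          omega
        simp [h1, h2]
  ext i j
  rw [kryM]
  simp only [Matrix.of_apply, key (j : ℕ), Matrix.one_apply]
  simp [Fin.ext_iff]

lemma kryP_eval (N : ℕ) (x : (Fin N × Fin N) ⊕ Fin N → ℝ) :
    MvPolynomial.eval x (kryP N)
      = (kryM N (Matrix.of fun a b => x (Sum.inl (a, b))) (fun k => x (Sum.inr k))).det := by
  rw [kryP, RingHom.map_det]
  congr 1
  rw [RingHom.mapMatrix_apply, kryM_map]
  have hA : (Matrix.of fun a b : Fin N => X (R := ℝ) (Sum.inl (a, b))).map (MvPolynomial.eval x)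
      = Matrix.of fun a b => x (Sum.inl (a, b)) := by
    ext a b; simp
  have hc : (fun k : Fin N => MvPolynomial.eval x (X (Sum.inr k)))
      = fun k => x (Sum.inr k) := by
    funext k; simp
  rw [hA]
  exact congrArg _ hc

lemma kryP_ne_zero (N : ℕ) : kryP N ≠ 0 := by
  intro h
  have := kryP_eval N (Sum.elim (fun p => if (p.2 : ℕ) + 1 = (p.1 : ℕ) then (1:ℝ) else 0)
    (fun i => if (i : ℕ) = 0 then 1 else 0))
  rw [h] at this
  simp only [map_zero] at this
  have h2 : (Matrix.of fun a b : Fin N =>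
      (Sum.elim (fun p : Fin N × Fin N => if (p.2 : ℕ) + 1 = (p.1 : ℕ) then (1:ℝ) else 0)
        (fun i : Fin N => if (i : ℕ) = 0 then 1 else 0)) (Sum.inl (a, b))) =
      Matrix.of fun i b : Fin N => if (b : ℕ) + 1 = (i : ℕ) then (1:ℝ) else 0 := rfl
  rw [h2] at this
  have h3 : (fun k : Fin N =>
      (Sum.elim (fun p : Fin N × Fin N => if (p.2 : ℕ) + 1 = (p.1 : ℕ) then (1:ℝ) else 0)
        (fun i : Fin N => if (i : ℕ) = 0 then 1 else 0)) (Sum.inr k)) =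
      (fun i : Fin N => if (i : ℕ) = 0 then (1:ℝ) else 0) := rfl
  rw [h3, kryM_shift] at this
  simp at this

lemma kry_li_iff (N : ℕ) (A : Matrix (Fin N) (Fin N) ℝ) (c : Fin N → ℝ) :
    (¬ LinearIndependent ℝ (fun j : Fin N => (A ^ (j : ℕ)).mulVec c)) ↔ (kryM N A c).det = 0 := by
  have h1 : (fun j : Fin N => (A ^ (j : ℕ)).mulVec c)
      = fun j => (Matrix.transpose (kryM N A c)) j := by
    funext j; funext i; rfl
  rw [h1]; change ¬ LinearIndependent ℝ (kryM N A c).col ↔ _; rw [Matrix.linearIndependent_cols_iff_isUnit, Matrix.isUnit_iff_isUnit_det,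
    isUnit_iff_ne_zero, not_not]


lemma aux_general_pi_eval_zero17 {ι : Type*} [Fintype ι] (ν : ι → Measure ℝ)
    (hprob : ∀ i, IsProbabilityMeasure (ν i)) (hatom : ∀ i, NoAtoms (ν i))
    (p : MvPolynomial ι ℝ) (hp : p ≠ 0) :
    Measure.pi ν {x | MvPolynomial.eval x p = 0} = 0 := by
  haveI := hprob
  set f : Fin (Fintype.card ι) ≃ ι := (Fintype.equivFin ι).symm with hf
  have mp := measurePreserving_piCongrLeft (α := fun _ : ι => ℝ) (μ := ν) f
  have hSm : MeasurableSet {x : ι → ℝ | MvPolynomial.eval x p = 0} :=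
    (aux_measurable_eval17 p) (measurableSet_singleton 0)
  rw [← mp.measure_preimage hSm.nullMeasurableSet]
  set p' : MvPolynomial (Fin (Fintype.card ι)) ℝ := rename f.symm p with hp'
  have hp'0 : p' ≠ 0 := by
    intro h
    exact hp ((MvPolynomial.rename_injective _ f.symm.injective) (by simpa using h))
  have hpre : ⇑(MeasurableEquiv.piCongrLeft (fun _ : ι => ℝ) f) ⁻¹'
      {x : ι → ℝ | MvPolynomial.eval x p = 0}
      = {y : Fin (Fintype.card ι) → ℝ | MvPolynomial.eval y p' = 0} := by
    ext y
    simp only [Set.mem_preimage, Set.mem_setOf_eq, hp', MvPolynomial.eval_rename]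
    have : (MeasurableEquiv.piCongrLeft (fun _ : ι => ℝ) f) y = y ∘ ⇑f.symm := by
      funext i
      conv_lhs => rw [show i = f (f.symm i) by simp]
      rw [MeasurableEquiv.coe_piCongrLeft, Equiv.piCongrLeft_apply_apply]
      rfl
    rw [this]
  rw [hpre]
  exact aux_pi_eval_zero (Fintype.card ι) (fun j => ν (f j)) (fun j => hprob _)
    (fun j => hatom _) p' hp'0

theorem stmt_17 {Ω : Type*} [MeasurableSpace Ω] (μ : Measure Ω) [IsProbabilityMeasure μ]
    (N : ℕ)
    (A : Ω → Matrix (Fin N) (Fin N) ℝ) (C : Ω → (Fin N → ℝ))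
    (Y : (Fin N × Fin N) ⊕ Fin N → Ω → ℝ)
    (hY : Y = Sum.elim (fun p ω => A ω p.1 p.2) (fun i ω => C ω i))
    (hm : ∀ k, Measurable (Y k))
    (hindep : ProbabilityTheory.iIndepFun Y μ)
    (hatomless : ∀ k, ∀ a : ℝ, μ {ω | Y k ω = a} = 0) :
    μ {ω | ¬ LinearIndependent ℝ (fun j : Fin N => ((A ω) ^ (j : ℕ)).mulVec (C ω))} = 0 := by
  classical
  set Φ : Ω → (((Fin N × Fin N) ⊕ Fin N) → ℝ) := fun ω k => Y k ω with hΦ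
  have hΦm : Measurable Φ := measurable_pi_lambda _ hm
  set ν : ((Fin N × Fin N) ⊕ Fin N) → Measure ℝ := fun k => μ.map (Y k) with hν
  have hprob : ∀ k, IsProbabilityMeasure (ν k) := fun k =>
    Measure.isProbabilityMeasure_map (hm k).aemeasurable
  have hatom : ∀ k, NoAtoms (ν k) := by
    intro k
    constructor
    intro a
    rw [hν, Measure.map_apply (hm k) (measurableSet_singleton a)]
    exact hatomless k a
  haveI := hprob
  -- map μ under Φ is the product measure
  have hmap : μ.map Φ = Measure.pi ν := by
    symm
    refine Measure.pi_eq fun s hs => ?_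
    rw [Measure.map_apply hΦm (MeasurableSet.univ_pi hs)]
    have hpre : Φ ⁻¹' (Set.pi Set.univ s) = ⋂ k ∈ (Finset.univ : Finset ((Fin N × Fin N) ⊕ Fin N)), Y k ⁻¹' s k := by
      ext ω
      simp [hΦ, Set.mem_pi]
    rw [hpre, hindep.measure_inter_preimage_eq_mul Finset.univ (fun k _ => hs k)]
    refine Finset.prod_congr rfl fun k _ => ?_
    rw [hν, Measure.map_apply (hm k) (hs k)]
  -- the bad set is the zero set of the polynomial
  have hset : {ω | ¬ LinearIndependent ℝ (fun j : Fin N => ((A ω) ^ (j : ℕ)).mulVec (C ω))}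
      = Φ ⁻¹' {x : ((Fin N × Fin N) ⊕ Fin N) → ℝ | MvPolynomial.eval x (kryP N) = 0} := by
    ext ω
    simp only [Set.mem_setOf_eq, Set.mem_preimage]
    rw [kry_li_iff, kryP_eval]
    have hA : (Matrix.of fun a b : Fin N => Φ ω (Sum.inl (a, b))) = A ω := by
      ext a b; simp [hΦ, hY]
    have hC : (fun k : Fin N => Φ ω (Sum.inr k)) = C ω := by
      funext k; simp [hΦ, hY]
    rw [hA, hC]
  have hSm : MeasurableSet {x : ((Fin N × Fin N) ⊕ Fin N) → ℝ | MvPolynomial.eval x (kryP N) = 0} :=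
    (aux_measurable_eval17 _) (measurableSet_singleton 0)
  rw [hset, ← Measure.map_apply hΦm hSm, hmap]
  exact aux_general_pi_eval_zero17 ν hprob hatom (kryP N) (kryP_ne_zero N)
end
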